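/- Let q be a prime power and let P(X) = \sum_{i=0}^{q-2} b_i X^i be a nonzero polynomial over F_q of degree at most q-2. Let m be the number of x in F_q^* with P(x) ≠ 0. Then there does not exist any k in {0, 1, ..., q-2} such that all m coefficients b_{k mod (q-1)}, b_{(k+1) mod (q-1)}, ..., b_{(k+m-1) mod (q-1)} are zero; equivalently, for every k in {0,...,q-2} at least one of the coefficients b_{(k+j) mod (q-1)}, j = 0,...,m-1, is nonzero. -/
import Mathlib

open Polynomial Finset

/-- **Theorem 1 (Kopparty–Wang, strengthened).** Let `P(X) = ∑ b_i X^i` be a nonzero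
polynomial over `F_q` of degree at most `q-2` and let `m` be the number of
`x ∈ F_q^*` with `P(x) ≠ 0`. Then there is no `k ∈ {0,…,q-2}` such that the `m`
coefficients `b_{(k+j) mod (q-1)}`, `j = 0,…,m-1`, are all zero. -/
theorem no_long_zero_run_of_coeffs
    {F : Type*} [Field F] [Fintype F] {q : ℕ} (hq : Fintype.card F = q)
    (P : Polynomial F) (hP : P ≠ 0) (hdeg : P.natDegree ≤ q - 2)
    (m : ℕ) (hm : m = Nat.card {x : F | x ≠ 0 ∧ Polynomial.eval x P ≠ 0}) :
    ¬ ∃ k ≤ q - 2, ∀ j < m, P.coeff ((k + j) % (q - 1)) = 0 := by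
  classical
  rintro ⟨k, hk, hwin⟩
  have hq2 : 2 ≤ q := hq ▸ Fintype.one_lt_card
  set n := q - 1 with hn
  have hn1 : 1 ≤ n := by omega
  have hdegn : P.natDegree < n := by omega
  have hxn : ∀ x : F, x ≠ 0 → x ^ n = 1 := fun x hx => by
    have := FiniteField.pow_card_sub_one_eq_one x hx
    rwa [hq] at this
  -- the set of nonzero elements
  set T : Finset F := Finset.univ.filter (fun x => x ≠ 0) with hT
  have hTcard : T.card = n := by
    have hTe : T = Finset.univ.erase 0 := by
      ext x; simp [hT, Finset.mem_erase]
    rw [hTe, Finset.card_erase_of_mem (Finset.mem_univ _), Finset.card_univ, hq]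
  set M : Finset F := T.filter (fun x => P.eval x ≠ 0) with hM
  set S : Finset F := T.filter (fun x => P.eval x = 0) with hS
  have hmM : m = M.card := by
    have hset : {x : F | x ≠ 0 ∧ Polynomial.eval x P ≠ 0} = ↑M := by
      ext x; simp [hM, hT]
    rw [hm, hset, Nat.card_coe_set_eq, Set.ncard_coe_finset]
  have hSM : M.card + S.card = n := by
    rw [← hTcard, hM, hS]
    have := Finset.card_filter_add_card_filter_not (s := T)
      (p := fun x => P.eval x ≠ 0)
    simpa [not_not] using this
  -- a witness where P does not vanish
  have hMne : M.Nonempty := by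
    rcases Finset.eq_empty_or_nonempty M with h | h
    · exfalso
      apply hP
      apply Polynomial.eq_zero_of_natDegree_lt_card_of_eval_eq_zero' P T
      · intro x hx
        by_contra hev
        have hmem : x ∈ M := by rw [hM]; exact Finset.mem_filter.mpr ⟨hx, hev⟩
        simp [h] at hmem
      · rw [hTcard]; exact hdegn
    · exact h
  obtain ⟨x₀, hx₀M⟩ := hMne
  have hx₀ne : x₀ ≠ 0 := by
    have h1 := Finset.mem_filter.mp hx₀M
    have h2 := Finset.mem_filter.mp h1.1
    exact h2.2
  have hx₀ev : P.eval x₀ ≠ 0 := (Finset.mem_filter.mp hx₀M).2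
  have hmn : m ≤ n := by omega
  -- the shifted polynomial
  set t := k + m with ht
  set Q : Polynomial F :=
    ∑ i ∈ Finset.range n, Polynomial.C (P.coeff ((i + t) % n)) * Polynomial.X ^ i with hQ
  -- coefficient formula for Q
  have hQcoeff : ∀ l, Q.coeff l = if l < n then P.coeff ((l + t) % n) else 0 := by
    intro l
    rw [hQ, Polynomial.finset_sum_coeff]
    simp only [Polynomial.coeff_C_mul, Polynomial.coeff_X_pow, mul_ite, mul_one, mul_zero]
    rw [Finset.sum_ite_eq (Finset.range n) l (fun i => P.coeff ((i + t) % n))]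
    simp [Finset.mem_range]
  -- key modular identity
  have hmod : ∀ j : ℕ, (j + (n - t % n) + t) % n = j % n := by
    intro j
    have hc : n * (t / n) + t % n = t := Nat.div_add_mod t n
    have hr : t % n < n := Nat.mod_lt _ (by omega)
    have h1 : j + (n - t % n) + t = j + n * (t / n + 1) := by
      rw [Nat.mul_add, Nat.mul_one]
      generalize n * (t / n) = d at hc ⊢
      omega
    rw [h1, Nat.add_mul_mod_self_left]
  -- evaluation identity
  have hQeval : ∀ x : F, x ≠ 0 → x ^ t * Q.eval x = P.eval x := by
    intro x hx
    have hx1 := hxn x hx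
    rw [Polynomial.eval_eq_sum_range' hdegn x, hQ]
    rw [Polynomial.eval_finset_sum]
    simp only [Polynomial.eval_mul, Polynomial.eval_C, Polynomial.eval_pow, Polynomial.eval_X]
    rw [Finset.mul_sum]
    have step1 : ∀ i ∈ Finset.range n,
        x ^ t * (P.coeff ((i + t) % n) * x ^ i)
          = P.coeff ((i + t) % n) * x ^ ((i + t) % n) := by
      intro i _
      rw [← pow_eq_pow_mod (i + t) hx1, pow_add]
      ring
    rw [Finset.sum_congr rfl step1]
    refine Finset.sum_nbij' (fun a => (a + t) % n) (fun b => (b + (n - t % n)) % n)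
      ?_ ?_ ?_ ?_ ?_
    · intro a _; exact Finset.mem_range.mpr (Nat.mod_lt _ (by omega))
    · intro b _; exact Finset.mem_range.mpr (Nat.mod_lt _ (by omega))
    · intro a ha
      show ((a + t) % n + (n - t % n)) % n = a
      rw [Nat.mod_add_mod, show a + t + (n - t % n) = a + (n - t % n) + t from by ring,
        hmod, Nat.mod_eq_of_lt (Finset.mem_range.mp ha)]
    · intro b hb
      show ((b + (n - t % n)) % n + t) % n = b
      rw [Nat.mod_add_mod, hmod, Nat.mod_eq_of_lt (Finset.mem_range.mp hb)]
    · intro a _; rfl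
  -- Q is nonzero
  have hQne : Q ≠ 0 := by
    intro h0
    apply hx₀ev
    rw [← hQeval x₀ hx₀ne, h0, Polynomial.eval_zero, mul_zero]
  -- high coefficients of Q vanish
  have hQhigh : ∀ l, n - m ≤ l → Q.coeff l = 0 := by
    intro l hl
    rw [hQcoeff]
    split_ifs with h
    · obtain ⟨j, hj, rfl⟩ : ∃ j, j < m ∧ l = n - m + j :=
        ⟨l - (n - m), by omega, by omega⟩
      have heq : (n - m + j + t) % n = (k + j) % n := by
        have h2 : n - m + j + t = (k + j) + n := by omega
        rw [h2, Nat.add_mod_right]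
      rw [heq]
      exact hwin j hj
    · rfl
  have hQdeg : Q.natDegree < n - m := by
    by_contra hcon
    push_neg at hcon
    exact Polynomial.leadingCoeff_ne_zero.mpr hQne (hQhigh _ hcon)
  -- Q vanishes on S, which is too large
  apply hQne
  apply Polynomial.eq_zero_of_natDegree_lt_card_of_eval_eq_zero' Q S
  · intro x hxS
    have h1 := Finset.mem_filter.mp hxS
    have hxne : x ≠ 0 := (Finset.mem_filter.mp h1.1).2
    have hev := hQeval x hxne
    rw [h1.2] at hev
    exact (mul_eq_zero.mp hev).resolve_left (pow_ne_zero _ hxne)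
  · have : S.card = n - m := by omega
    rw [this]; exact hQdeg
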